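/- Conversely, if each λ_l is continuous on [a,b] and the matching conditions λ_l(b) − λ_{l+1}(a) = s_{l+1}·λ_0(a)/(1 − s_0) − s_l·λ_{N-1}(b)/(1 − s_{N-1}) hold for l = 0,…,N−2, then the fractal function f_λ is continuous on [a,b]. -/

import Mathlib

/-- The affine map `u_l : [a,b] → [x_l, x_{l+1}]` with `u_l a = x_l`, `u_l b = x_{l+1}`. -/
noncomputable def uMap (a b : ℝ) (x : ℕ → ℝ) (l : ℕ) (t : ℝ) : ℝ :=
  x l + ((x (l + 1) - x l) / (b - a)) * (t - a)

/-- `f` is bounded on the set `Ω`. -/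
def BddOn (f : ℝ → ℝ) (Ω : Set ℝ) : Prop := ∃ C, ∀ t ∈ Ω, |f t| ≤ C

/-- `f` satisfies the self-referential (fixed point of the Read–Bajraktarević operator)
equation `f(y) = s_l f(u_l⁻¹ y) + λ_l(u_l⁻¹ y)` on each piece `[x_l, x_{l+1})`
(`v l` denotes `u_l⁻¹`), together with `f(b) = s_{N-1} f(b) + λ_{N-1}(b)`. -/
def SelfRef (a b : ℝ) (N : ℕ) (x : ℕ → ℝ) (v : ℕ → ℝ → ℝ) (s : ℕ → ℝ)
    (lam : ℕ → ℝ → ℝ) (f : ℝ → ℝ) : Prop :=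
  (∀ l < N, ∀ y ∈ Set.Ico (x l) (x (l + 1)), f y = s l * f (v l y) + lam l (v l y)) ∧
  f b = s (N - 1) * f b + lam (N - 1) b

/-- Pasting lemma for two closed sets. -/
theorem continuousOn_union_closed' {α β : Type*} [TopologicalSpace α] [TopologicalSpace β]
    {f : α → β} {s t : Set α} (hs : IsClosed s) (ht : IsClosed t)
    (hfs : ContinuousOn f s) (hft : ContinuousOn f t) : ContinuousOn f (s ∪ t) := by
  intro y hy
  apply ContinuousWithinAt.union
  · by_cases h : y ∈ s
    · exact hfs y h
    · exact continuousWithinAt_of_notMem_closure (by rwa [hs.closure_eq])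
  · by_cases h : y ∈ t
    · exact hft y h
    · exact continuousWithinAt_of_notMem_closure (by rwa [ht.closure_eq])

open Classical in
/-- Index of the piece containing `y`. -/
noncomputable def idxL (N : ℕ) (x : ℕ → ℝ) (y : ℝ) : ℕ :=
  Nat.findGreatest (fun l => x l ≤ y) (N - 1)

/-- The inverse affine map `u_l⁻¹`. -/
noncomputable def wMap (a b : ℝ) (x : ℕ → ℝ) (l : ℕ) (y : ℝ) : ℝ :=
  a + (b - a) / (x (l + 1) - x l) * (y - x l)

/-- The Read–Bajraktarević operator. -/
noncomputable def TOp (a b : ℝ) (N : ℕ) (x : ℕ → ℝ) (v : ℕ → ℝ → ℝ) (s : ℕ → ℝ)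
    (lam : ℕ → ℝ → ℝ) (g : ℝ → ℝ) (y : ℝ) : ℝ :=
  s (idxL N x y) * g (v (idxL N x y) y) + lam (idxL N x y) (v (idxL N x y) y)

/-- Conversely, if each `λ_l` is continuous on `[a,b]` and the matching conditions
hold for `l = 0, …, N-2`, then the fractal function `f_λ` is continuous on `[a,b]`. -/
theorem stmt10 (a b : ℝ) (hab : a < b) (N : ℕ) (hN : 2 ≤ N)
    (x : ℕ → ℝ) (hx0 : x 0 = a) (hxN : x N = b)
    (hxmono : ∀ l < N, x l < x (l + 1))
    (v : ℕ → ℝ → ℝ) (hv : ∀ l < N, ∀ t : ℝ, v l (uMap a b x l t) = t)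
    (s : ℕ → ℝ) (hs : ∀ l < N, |s l| < 1)
    (lam : ℕ → ℝ → ℝ) (hlamc : ∀ l < N, ContinuousOn (lam l) (Set.Icc a b))
    (hmatch : ∀ l : ℕ, l + 1 < N →
      lam l b - lam (l + 1) a =
        s (l + 1) * (lam 0 a / (1 - s 0)) - s l * (lam (N - 1) b / (1 - s (N - 1))))
    (f : ℝ → ℝ) (hfb : BddOn f (Set.Icc a b))
    (hf : SelfRef a b N x v s lam f) :
    ContinuousOn f (Set.Icc a b) := by
  classical
  obtain ⟨C0, hC0⟩ := hfb
  obtain ⟨heq, heqb⟩ := hf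
  have hba : (0:ℝ) < b - a := by linarith
  have hN0 : 0 < N := by omega
  have hN1 : N - 1 < N := by omega
  -- monotone chain
  have hchain : ∀ i j : ℕ, i ≤ j → j ≤ N → x i ≤ x j := by
    intro i j hij
    induction j, hij using Nat.le_induction with
    | base => intro _; exact le_rfl
    | succ j hij ih =>
      intro hjN
      exact le_trans (ih (by omega)) (hxmono j (by omega)).le
  have hxalow : ∀ l, l ≤ N → a ≤ x l := fun l hl => hx0 ▸ hchain 0 l (Nat.zero_le _) hl
  have hxbhigh : ∀ l, l ≤ N → x l ≤ b := fun l hl => hxN ▸ hchain l N hl le_rfl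
  have hΔ : ∀ l, l < N → (0:ℝ) < x (l+1) - x l := fun l hl => sub_pos.2 (hxmono l hl)
  -- wMap facts
  have hwu : ∀ l, l < N → ∀ y, uMap a b x l (wMap a b x l y) = y := by
    intro l hl y
    have h1 := (hΔ l hl).ne'
    unfold uMap wMap
    field_simp
    ring
  have hvw : ∀ l, l < N → ∀ y, v l y = wMap a b x l y := by
    intro l hl y
    have h := hv l hl (wMap a b x l y)
    rwa [hwu l hl y] at h
  have hwmaps : ∀ l, l < N → ∀ y ∈ Set.Icc (x l) (x (l+1)), wMap a b x l y ∈ Set.Icc a b := by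
    intro l hl y hy
    have h1 := hΔ l hl
    constructor
    · have h2 : 0 ≤ (b - a) / (x (l+1) - x l) * (y - x l) :=
        mul_nonneg (div_nonneg hba.le h1.le) (by linarith [hy.1])
      unfold wMap; linarith
    · have h2 : (b - a) / (x (l+1) - x l) * (y - x l) ≤ b - a := by
        rw [div_mul_eq_mul_div, div_le_iff₀ h1]
        nlinarith [hy.2]
      unfold wMap; linarith
  have hwl : ∀ l : ℕ, wMap a b x l (x l) = a := by intro l; simp [wMap]
  have hwr : ∀ l, l < N → wMap a b x l (x (l+1)) = b := by
    intro l hl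
    have h1 := (hΔ l hl).ne'
    unfold wMap
    field_simp
    ring
  -- index facts
  have hLle : ∀ y : ℝ, idxL N x y < N := fun y => lt_of_le_of_lt (Nat.findGreatest_le _) hN1
  have hLmem : ∀ y : ℝ, a ≤ y → y < b → x (idxL N x y) ≤ y ∧ y < x (idxL N x y + 1) := by
    intro y hay hyb
    have h0 : x 0 ≤ y := by rw [hx0]; exact hay
    have hspec : x (idxL N x y) ≤ y :=
      Nat.findGreatest_spec (P := fun l => x l ≤ y) (Nat.zero_le _) h0
    refine ⟨hspec, ?_⟩
    by_cases hcase : idxL N x y = N - 1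
    · have hxe : x (idxL N x y + 1) = b := by
        rw [hcase, show N - 1 + 1 = N from by omega, hxN]
      linarith
    · have hle : idxL N x y + 1 ≤ N - 1 := by
        have := Nat.findGreatest_le (P := fun l => x l ≤ y) (N - 1)
        unfold idxL at hcase ⊢
        omega
      have hng := Nat.findGreatest_is_greatest (P := fun l => x l ≤ y)
        (Nat.lt_succ_self _) hle
      exact not_le.1 hng
  have hLeq : ∀ l, l < N → ∀ y : ℝ, x l ≤ y → y < x (l+1) → idxL N x y = l := by
    intro l hl y h1 h2
    have hle : l ≤ N - 1 := by omega
    apply le_antisymm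
    · by_contra hgt
      push_neg at hgt
      have hsp : x (idxL N x y) ≤ y :=
        Nat.findGreatest_spec (P := fun l => x l ≤ y) hle h1
      have hch : x (l+1) ≤ x (idxL N x y) := hchain (l+1) _ hgt (hLle y).le
      linarith
    · exact Nat.le_findGreatest hle h1
  have hLb : idxL N x b = N - 1 := by
    apply le_antisymm (Nat.findGreatest_le _)
    exact Nat.le_findGreatest le_rfl (hxbhigh (N-1) (by omega))
  have hvNb : v (N-1) b = b := by
    rw [hvw (N-1) hN1]
    have h : wMap a b x (N-1) (x (N - 1 + 1)) = b := hwr (N-1) hN1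
    rwa [show N - 1 + 1 = N from by omega, hxN] at h
  have hTdef : ∀ (g : ℝ → ℝ) (y : ℝ), TOp a b N x v s lam g y =
      s (idxL N x y) * g (v (idxL N x y) y) + lam (idxL N x y) (v (idxL N x y) y) :=
    fun g y => rfl
  -- f is a fixed point of T on [a,b]
  have hfT : ∀ y ∈ Set.Icc a b, f y = TOp a b N x v s lam f y := by
    intro y hy
    rcases eq_or_lt_of_le hy.2 with hyb | hyb
    · rw [hyb, hTdef, hLb, hvNb]; exact heqb
    · obtain ⟨h1, h2⟩ := hLmem y hy.1 hyb
      exact heq _ (hLle y) y ⟨h1, h2⟩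
  -- endpoint values
  set A := lam 0 a / (1 - s 0) with hA
  set Bv := lam (N-1) b / (1 - s (N-1)) with hBv
  have hs0ne : (1:ℝ) - s 0 ≠ 0 := by
    have := (abs_lt.1 (hs 0 hN0)).2; intro h; linarith
  have hsNne : (1:ℝ) - s (N-1) ≠ 0 := by
    have := (abs_lt.1 (hs (N-1) hN1)).2; intro h; linarith
  have hAeq : s 0 * A + lam 0 a = A := by
    rw [hA]; field_simp; ring
  have hBeq : s (N-1) * Bv + lam (N-1) b = Bv := by
    rw [hBv]; field_simp; ring
  -- T on a closed piece
  have hTpiece : ∀ g : ℝ → ℝ, g a = A → g b = Bv → ∀ l, l < N →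
      ∀ y ∈ Set.Icc (x l) (x (l+1)),
      TOp a b N x v s lam g y = s l * g (wMap a b x l y) + lam l (wMap a b x l y) := by
    intro g hga hgb l hl y hy
    rcases lt_or_eq_of_le hy.2 with h2 | h2
    · rw [hTdef, hLeq l hl y hy.1 h2, hvw l hl]
    · rcases Nat.lt_or_ge (l+1) N with hl1 | hl1
      · have hLy : idxL N x y = l + 1 :=
          hLeq (l+1) hl1 y (h2.ge) (by rw [h2]; exact hxmono (l+1) hl1)
        have hw1 : wMap a b x (l+1) y = a := by rw [h2]; exact hwl (l+1)
        have hw2 : wMap a b x l y = b := by rw [h2]; exact hwr l hl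
        rw [hTdef, hLy, hvw (l+1) hl1, hw1, hw2, hga, hgb]
        have hm := hmatch l hl1
        linarith
      · have hyb : y = b := by rw [h2, show l + 1 = N from by omega, hxN]
        have hlN : idxL N x b = l := by rw [hLb]; omega
        rw [hTdef, hyb, hlN, hvw l hl]
  -- T preserves endpoints
  have hTa : ∀ g : ℝ → ℝ, g a = A → TOp a b N x v s lam g a = A := by
    intro g hga
    have hx1 : a < x 1 := by
      have := hxmono 0 hN0; rwa [hx0] at this
    have h1 : idxL N x a = 0 := hLeq 0 hN0 a (hx0.le) hx1
    have hw0 : wMap a b x 0 a = a := by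
      have := hwl 0; rwa [hx0] at this
    rw [hTdef, h1, hvw 0 hN0, hw0, hga]; exact hAeq
  have hTb : ∀ g : ℝ → ℝ, g b = Bv → TOp a b N x v s lam g b = Bv := by
    intro g hgb
    rw [hTdef, hLb, hvNb, hgb]; exact hBeq
  -- T preserves continuity
  have hTcont : ∀ g : ℝ → ℝ, ContinuousOn g (Set.Icc a b) → g a = A → g b = Bv →
      ContinuousOn (TOp a b N x v s lam g) (Set.Icc a b) := by
    intro g hg hga hgb
    have hpiece : ∀ l, l < N →
        ContinuousOn (TOp a b N x v s lam g) (Set.Icc (x l) (x (l+1))) := by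
      intro l hl
      have hwcont : Continuous (wMap a b x l) := by
        unfold wMap; fun_prop
      have hmain : ContinuousOn
          (fun y => s l * g (wMap a b x l y) + lam l (wMap a b x l y))
          (Set.Icc (x l) (x (l+1))) := by
        apply ContinuousOn.add
        · exact continuousOn_const.mul (hg.comp hwcont.continuousOn (hwmaps l hl))
        · exact (hlamc l hl).comp hwcont.continuousOn (hwmaps l hl)
      exact hmain.congr (hTpiece g hga hgb l hl)
    have hstep : ∀ k, k ≤ N → ContinuousOn (TOp a b N x v s lam g) (Set.Icc a (x k)) := by
      intro k
      induction k with
      | zero =>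
        intro _
        rw [hx0, Set.Icc_self]
        exact continuousOn_singleton _ _
      | succ k ih =>
        intro hk
        have hchk : a ≤ x k := hxalow k (by omega)
        have hunion : Set.Icc a (x (k+1)) = Set.Icc a (x k) ∪ Set.Icc (x k) (x (k+1)) :=
          (Set.Icc_union_Icc_eq_Icc hchk (hxmono k (by omega)).le).symm
        rw [hunion]
        exact continuousOn_union_closed' isClosed_Icc isClosed_Icc
          (ih (by omega)) (hpiece k (by omega))
    have h := hstep N le_rfl
    rwa [hxN] at h
  -- contraction factor
  have hNne : (Finset.range N).Nonempty := ⟨0, Finset.mem_range.2 hN0⟩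
  set σ := (Finset.range N).sup' hNne (fun l => |s l|) with hσ
  have hσlt : σ < 1 := by
    rw [hσ]
    exact (Finset.sup'_lt_iff hNne).2 fun l hl => hs l (Finset.mem_range.1 hl)
  have hσle : ∀ l, l < N → |s l| ≤ σ := fun l hl =>
    Finset.le_sup' (fun l => |s l|) (Finset.mem_range.2 hl)
  have hσ0 : (0:ℝ) ≤ σ := le_trans (abs_nonneg _) (hσle 0 hN0)
  have hvmem : ∀ y ∈ Set.Icc a b, v (idxL N x y) y ∈ Set.Icc a b := by
    intro y hy
    rcases eq_or_lt_of_le hy.2 with hyb | hyb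
    · rw [hyb, hLb, hvNb]; exact ⟨hab.le, le_rfl⟩
    · obtain ⟨h1, h2⟩ := hLmem y hy.1 hyb
      rw [hvw _ (hLle y)]
      exact hwmaps _ (hLle y) y ⟨h1, h2.le⟩
  -- contraction estimate
  have hcontr : ∀ (g : ℝ → ℝ) (M : ℝ), (∀ y ∈ Set.Icc a b, |g y - f y| ≤ M) →
      ∀ y ∈ Set.Icc a b, |TOp a b N x v s lam g y - f y| ≤ σ * M := by
    intro g M hgM y hy
    rw [hfT y hy, hTdef, hTdef]
    have hring : s (idxL N x y) * g (v (idxL N x y) y) + lam (idxL N x y) (v (idxL N x y) y)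
        - (s (idxL N x y) * f (v (idxL N x y) y) + lam (idxL N x y) (v (idxL N x y) y))
        = s (idxL N x y) * (g (v (idxL N x y) y) - f (v (idxL N x y) y)) := by ring
    rw [hring, abs_mul]
    exact mul_le_mul (hσle _ (hLle y)) (hgM _ (hvmem y hy)) (abs_nonneg _) hσ0
  -- initial continuous function
  set g0 : ℝ → ℝ := fun t => A + (Bv - A) * ((t - a) / (b - a)) with hg0
  have hg0a : g0 a = A := by simp [hg0]
  have hg0b : g0 b = Bv := by
    rw [hg0]
    field_simp
    ring
  have hg0c : ContinuousOn g0 (Set.Icc a b) := by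
    apply Continuous.continuousOn
    rw [hg0]; fun_prop
  set M0 := |A| + |Bv - A| + C0 with hM0
  have hg0bd : ∀ y ∈ Set.Icc a b, |g0 y - f y| ≤ M0 := by
    intro y hy
    have hr : |(y - a) / (b - a)| ≤ 1 := by
      rw [abs_div, abs_of_pos hba, abs_of_nonneg (by linarith [hy.1] : (0:ℝ) ≤ y - a),
        div_le_one hba]
      linarith [hy.2]
    have h1 : |g0 y| ≤ |A| + |Bv - A| := by
      rw [hg0]
      calc |A + (Bv - A) * ((y - a) / (b - a))| ≤ |A| + |(Bv - A) * ((y - a) / (b - a))| :=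
            abs_add_le _ _
        _ = |A| + |Bv - A| * |(y - a) / (b - a)| := by rw [abs_mul]
        _ ≤ |A| + |Bv - A| * 1 :=
            add_le_add le_rfl (mul_le_mul_of_nonneg_left hr (abs_nonneg _))
        _ = |A| + |Bv - A| := by ring
    calc |g0 y - f y| = |g0 y + -(f y)| := by rw [sub_eq_add_neg]
      _ ≤ |g0 y| + |-(f y)| := abs_add_le _ _
      _ = |g0 y| + |f y| := by rw [abs_neg]
      _ ≤ (|A| + |Bv - A|) + C0 := add_le_add h1 (hC0 y hy)
      _ = M0 := by rw [hM0]
  -- iterates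
  set G : ℕ → ℝ → ℝ := fun n => (TOp a b N x v s lam)^[n] g0 with hG
  have hGzero : G 0 = g0 := rfl
  have hGsucc : ∀ n, G (n+1) = TOp a b N x v s lam (G n) := fun n =>
    Function.iterate_succ_apply' _ _ _
  have hGprop : ∀ n, ContinuousOn (G n) (Set.Icc a b) ∧ G n a = A ∧ G n b = Bv := by
    intro n
    induction n with
    | zero => exact ⟨hg0c, hg0a, hg0b⟩
    | succ n ih =>
      rw [hGsucc]
      exact ⟨hTcont _ ih.1 ih.2.1 ih.2.2, hTa _ ih.2.1, hTb _ ih.2.2⟩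
  have hGbd : ∀ n, ∀ y ∈ Set.Icc a b, |G n y - f y| ≤ σ ^ n * M0 := by
    intro n
    induction n with
    | zero => intro y hy; simpa [hGzero] using hg0bd y hy
    | succ n ih =>
      intro y hy
      rw [hGsucc]
      calc |TOp a b N x v s lam (G n) y - f y| ≤ σ * (σ ^ n * M0) :=
            hcontr (G n) (σ ^ n * M0) ih y hy
        _ = σ ^ (n+1) * M0 := by ring
  -- uniform convergence
  have hten : Filter.Tendsto (fun n => σ ^ n * M0) Filter.atTop (nhds 0) := by
    have h := tendsto_pow_atTop_nhds_zero_of_lt_one hσ0 hσlt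
    simpa using h.mul_const M0
  have hTU : TendstoUniformlyOn G f Filter.atTop (Set.Icc a b) := by
    rw [Metric.tendstoUniformlyOn_iff]
    intro ε hε
    have hev : ∀ᶠ n in Filter.atTop, σ ^ n * M0 < ε := hten.eventually (gt_mem_nhds hε)
    filter_upwards [hev] with n hn y hy
    calc dist (f y) (G n y) = |G n y - f y| := by rw [Real.dist_eq, abs_sub_comm]
      _ ≤ σ ^ n * M0 := hGbd n y hy
      _ < ε := hn
  exact hTU.continuousOn (Filter.Eventually.of_forall fun n => (hGprop n).1).frequently
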